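/- If the global interaction graph G(f) of f : {0,1}^n → {0,1}^n has no positive cycle, then f has at most one fixed point. -/

import Mathlib

/-- State of a Boolean network with `n` components. -/
abbrev BState (n : ℕ) := Fin n → Bool

/-- Positive arc `j → i` in the global interaction graph `G(f)`:
the discrete partial derivative `f_{ij}` is positive at some state. -/
def posArc {n : ℕ} (f : BState n → BState n) (j i : Fin n) : Prop :=
  ∃ x : BState n, f (Function.update x j true) i = true ∧
    f (Function.update x j false) i = false

/-- Negative arc `j → i` in `G(f)`:
the discrete partial derivative `f_{ij}` is negative at some state. -/
def negArc {n : ℕ} (f : BState n → BState n) (j i : Fin n) : Prop :=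
  ∃ x : BState n, f (Function.update x j true) i = false ∧
    f (Function.update x j false) i = true

/-- Unsigned arc `j → i` in the interaction graph: `f_i` depends on `x_j`. -/
def arc {n : ℕ} (f : BState n → BState n) (j i : Fin n) : Prop :=
  posArc f j i ∨ negArc f j i

/-- Arc of given sign (`true` = positive, `false` = negative). -/
def signedArc {n : ℕ} (f : BState n → BState n) (ε : Bool) (j i : Fin n) : Prop :=
  if ε then posArc f j i else negArc f j i

/-- A signed cycle of `G(f)`: vertices `vert 0 → vert 1 → ⋯ → vert len → vert 0`
(so the length is `len + 1`), pairwise distinct, each consecutive arc present in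
`G(f)` with sign `sign k`. -/
structure SignedCycle {n : ℕ} (f : BState n → BState n) where
  len : ℕ
  vert : Fin (len + 1) → Fin n
  inj : Function.Injective vert
  sign : Fin (len + 1) → Bool
  arcs : ∀ k : Fin (len + 1), signedArc f (sign k) (vert k) (vert (k + 1))

/-- Length (number of arcs) of a signed cycle. -/
def SignedCycle.length {n : ℕ} {f : BState n → BState n} (C : SignedCycle f) : ℕ :=
  C.len + 1

/-- A cycle is positive iff it has an even number of negative arcs. -/
def SignedCycle.Positive {n : ℕ} {f : BState n → BState n} (C : SignedCycle f) : Prop :=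
  Even (Finset.univ.filter (fun k => C.sign k = false)).card

/-- A cycle is negative iff it has an odd number of negative arcs. -/
def SignedCycle.Negative {n : ℕ} {f : BState n → BState n} (C : SignedCycle f) : Prop :=
  Odd (Finset.univ.filter (fun k => C.sign k = false)).card

/-- An unsigned cycle of the interaction graph. -/
structure UCycle {n : ℕ} (f : BState n → BState n) where
  len : ℕ
  vert : Fin (len + 1) → Fin n
  inj : Function.Injective vert
  arcs : ∀ k : Fin (len + 1), arc f (vert k) (vert (k + 1))

/-- One step of the asynchronous dynamics `Γ(f)`. -/
def asyncStep {n : ℕ} (f : BState n → BState n) (x y : BState n) : Prop :=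
  ∃ i : Fin n, f x i ≠ x i ∧ y = Function.update x i (f x i)

/-- There is a path of length `L` from `x` to `y` in `Γ(f)`. -/
def asyncPath {n : ℕ} (f : BState n → BState n) (x y : BState n) (L : ℕ) : Prop :=
  ∃ p : ℕ → BState n, p 0 = x ∧ p L = y ∧ ∀ k < L, asyncStep f (p k) (p (k + 1))


/-- Mixed state: `y` on coordinates in `l`, `x` elsewhere. -/
def mix {n : ℕ} (x y : BState n) (l : List (Fin n)) : BState n :=
  fun i => if i ∈ l then y i else x i

lemma mix_nil {n : ℕ} (x y : BState n) : mix x y [] = x := by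
  funext i; simp [mix]

lemma mix_cons {n : ℕ} (x y : BState n) (j : Fin n) (tl : List (Fin n)) :
    mix x y (j :: tl) = Function.update (mix x y tl) j (y j) := by
  funext i
  by_cases hij : i = j
  · subst hij; simp [mix, Function.update]
  · simp [mix, Function.update, hij]

lemma key {n : ℕ} (f : BState n → BState n) (x y : BState n)
    (hx : f x = x) (i : Fin n) (hi : x i ≠ y i) :
    ∀ l : List (Fin n), l.Nodup → (∀ j ∈ l, x j ≠ y j) →
      f (mix x y l) i = y i →
      ∃ j, x j ≠ y j ∧ signedArc f (y i == y j) j i := by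
  intro l
  induction l with
  | nil =>
    intro _ _ hf
    rw [mix_nil, hx] at hf
    exact absurd hf hi
  | cons j tl ih =>
    intro hnd hmem hf
    by_cases hrec : f (mix x y tl) i = y i
    · exact ih hnd.of_cons (fun j hj => hmem j (List.mem_cons_of_mem _ hj)) hrec
    · have hxj : x j ≠ y j := hmem j List.mem_cons_self
      have hjtl : j ∉ tl := (List.nodup_cons.mp hnd).1
      have hzj : mix x y tl j = x j := by simp [mix, hjtl]
      have hfx : f (mix x y tl) i = x i := by
        revert hrec hi; cases (f (mix x y tl) i) <;> cases (x i) <;> cases (y i) <;> simp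
      rw [mix_cons] at hf
      refine ⟨j, hxj, ?_⟩
      have hxyj : x j = !(y j) := by revert hxj; cases (x j) <;> cases (y j) <;> simp
      cases hyj : y j with
      | true =>
        have hup0 : Function.update (mix x y tl) j false = mix x y tl := by
          have hv : (false : Bool) = mix x y tl j := by rw [hzj, hxyj, hyj]; rfl
          rw [hv, Function.update_eq_self]
        rw [hyj] at hf
        cases hyi : y i with
        | true =>
          exact show posArc f j i from ⟨mix x y tl, by rw [hf, hyi], by
            rw [hup0, hfx]; revert hi; rw [hyi]; cases (x i) <;> simp⟩
        | false =>
          exact show negArc f j i from ⟨mix x y tl, by rw [hf, hyi], by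
            rw [hup0, hfx]; revert hi; rw [hyi]; cases (x i) <;> simp⟩
      | false =>
        have hup1 : Function.update (mix x y tl) j true = mix x y tl := by
          have hv : (true : Bool) = mix x y tl j := by rw [hzj, hxyj, hyj]; rfl
          rw [hv, Function.update_eq_self]
        rw [hyj] at hf
        cases hyi : y i with
        | true =>
          exact show negArc f j i from ⟨mix x y tl, by
            rw [hup1, hfx]; revert hi; rw [hyi]; cases (x i) <;> simp, by rw [hf, hyi]⟩
        | false =>
          exact show posArc f j i from ⟨mix x y tl, by
            rw [hup1, hfx]; revert hi; rw [hyi]; cases (x i) <;> simp, by rw [hf, hyi]⟩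

/-- Thomas' first rule (global version): if `G(f)` has no positive cycle,
then `f` has at most one fixed point. -/
theorem stmt1 {n : ℕ} (f : BState n → BState n)
    (h : ∀ C : SignedCycle f, ¬ C.Positive) :
    ∀ x y : BState n, f x = x → f y = y → x = y := by
  classical
  intro x y hx hy
  by_contra hne
  have hΔ : ∃ i, x i ≠ y i := by
    by_contra hall; push_neg at hall; exact hne (funext hall)
  obtain ⟨i0, hi0⟩ := hΔ
  -- selection of a predecessor arc for every disagreeing coordinate
  have hsel : ∀ i : Fin n, x i ≠ y i →
      ∃ j, x j ≠ y j ∧ signedArc f (y i == y j) j i := by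
    intro i hi
    set l := (Finset.univ.filter (fun j => x j ≠ y j)).toList with hl
    have hnd : l.Nodup := Finset.nodup_toList _
    have hmem : ∀ j ∈ l, x j ≠ y j := by
      intro j hj
      have := Finset.mem_toList.mp hj
      exact (Finset.mem_filter.mp this).2
    have hmix : mix x y l = y := by
      funext j
      by_cases hj : x j = y j
      · by_cases hjl : j ∈ l
        · simp [mix, hjl]
        · simp [mix, hjl, hj]
      · have hjl : j ∈ l :=
          Finset.mem_toList.mpr (Finset.mem_filter.mpr ⟨Finset.mem_univ _, hj⟩)
        simp [mix, hjl]
    exact key f x y hx i hi l hnd hmem (by rw [hmix, hy])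
  have hsel' : ∀ i : Fin n, ∃ j,
      x i ≠ y i → (x j ≠ y j ∧ signedArc f (y i == y j) j i) := by
    intro i
    by_cases hi : x i ≠ y i
    · obtain ⟨j, hj⟩ := hsel i hi; exact ⟨j, fun _ => hj⟩
    · exact ⟨i, fun hcon => absurd hcon hi⟩
  choose g hg using hsel'
  -- iterates of g stay in the disagreement set
  have hiter : ∀ z : Fin n, x z ≠ y z → ∀ t, x (g^[t] z) ≠ y (g^[t] z) := by
    intro z hz t
    induction t with
    | zero => exact hz
    | succ t ih => rw [Function.iterate_succ_apply']; exact (hg _ ih).1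
  -- find a periodic point in the disagreement set
  have hcp : ∃ c p, 0 < p ∧ g^[p] c = c ∧ x c ≠ y c := by
    obtain ⟨a, b, hab, heq⟩ := Finite.exists_ne_map_eq_of_infinite (fun k : ℕ => g^[k] i0)
    rcases hab.lt_or_gt with hlt | hlt
    · refine ⟨g^[a] i0, b - a, by omega, ?_, hiter i0 hi0 a⟩
      rw [← Function.iterate_add_apply, Nat.sub_add_cancel hlt.le]
      exact heq.symm
    · refine ⟨g^[b] i0, a - b, by omega, ?_, hiter i0 hi0 b⟩
      rw [← Function.iterate_add_apply, Nat.sub_add_cancel hlt.le]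
      exact heq
  obtain ⟨c, p, hp, hgp, hc⟩ := hcp
  have hcper : c ∈ Function.periodicPts g := ⟨p, hp, hgp⟩
  set m := Function.minimalPeriod g c with hm
  have hmpos : 0 < m := Function.minimalPeriod_pos_iff_mem_periodicPts.mpr hcper
  set L := m - 1 with hLdef
  have hL1 : L + 1 = m := by omega
  have hgm : g^[L + 1] c = c := by
    rw [hL1]; exact Function.isPeriodicPt_minimalPeriod g c
  set vert : Fin (L + 1) → Fin n := fun k => g^[L - k.val] c with hvert
  have hvΔ : ∀ k, x (vert k) ≠ y (vert k) := fun k => hiter c hc _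
  have hinj : Function.Injective vert := by
    intro k1 k2 hk
    have h1 : L - k1.val ∈ Set.Iio m := Set.mem_Iio.mpr (by omega)
    have h2 : L - k2.val ∈ Set.Iio m := Set.mem_Iio.mpr (by omega)
    have heq := Function.iterate_injOn_Iio_minimalPeriod h1 h2 hk
    have hk1 : k1.val < L + 1 := k1.isLt
    have hk2 : k2.val < L + 1 := k2.isLt
    exact Fin.ext (by omega)
  have hgvert : ∀ k : Fin (L + 1), g (vert (k + 1)) = vert k := by
    intro k
    rcases eq_or_ne k (Fin.last L) with hkL | hkL
    · have h1 : ((k + 1 : Fin (L + 1))).val = 0 := by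
        rw [Fin.val_add_one, if_pos hkL]
      have h2 : k.val = L := by rw [hkL]; rfl
      show g (g^[L - ((k + 1 : Fin (L+1))).val] c) = g^[L - k.val] c
      rw [h1, h2, Nat.sub_zero, Nat.sub_self]
      rw [show g (g^[L] c) = g^[L + 1] c from (Function.iterate_succ_apply' g L c).symm]
      exact hgm
    · have h1 : ((k + 1 : Fin (L + 1))).val = k.val + 1 := by
        rw [Fin.val_add_one, if_neg hkL]
      have hklt : k.val < L := Fin.val_lt_last hkL
      show g (g^[L - ((k + 1 : Fin (L+1))).val] c) = g^[L - k.val] c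
      rw [h1]
      rw [show L - k.val = (L - (k.val + 1)) + 1 from by omega]
      exact (Function.iterate_succ_apply' g _ c).symm
  have harcs : ∀ k : Fin (L + 1),
      signedArc f (y (vert (k + 1)) == y (vert k)) (vert k) (vert (k + 1)) := by
    intro k
    have h2 := (hg (vert (k + 1)) (hvΔ _)).2
    rw [hgvert k] at h2
    exact h2
  set C : SignedCycle f :=
    ⟨L, vert, hinj, fun k => (y (vert (k + 1)) == y (vert k)), harcs⟩ with hC
  apply h C
  -- parity: the number of negative arcs around the cycle is even
  show Even ((Finset.univ.filter (fun k => C.sign k = false)).card)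
  have hpt : ∀ a b : Bool, ((if (a == b) = false then 1 else 0 : ℕ) : ZMod 2)
      = (if a then 1 else 0) + (if b then 1 else 0) := by decide
  have hcast : (((Finset.univ.filter (fun k => C.sign k = false)).card : ℕ) : ZMod 2) = 0 := by
    rw [Finset.card_filter, Nat.cast_sum]
    have hsum : ∀ k : Fin (L + 1),
        ((if C.sign k = false then 1 else 0 : ℕ) : ZMod 2)
        = (if y (vert (k + 1)) then 1 else 0) + (if y (vert k) then 1 else 0) :=
      fun k => hpt _ _
    rw [Finset.sum_congr rfl (fun k _ => hsum k), Finset.sum_add_distrib]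
    have hshift : (∑ k : Fin (L + 1), (if y (vert (k + 1)) then (1 : ZMod 2) else 0))
        = ∑ k : Fin (L + 1), (if y (vert k) then (1 : ZMod 2) else 0) :=
      Fintype.sum_equiv (Equiv.addRight 1)
        (fun k => if y (vert (k + 1)) then (1 : ZMod 2) else 0)
        (fun k => if y (vert k) then (1 : ZMod 2) else 0) (fun k => rfl)
    rw [hshift, ← two_mul]
    have h2 : (2 : ZMod 2) = 0 := by decide
    rw [h2, zero_mul]
  have hdvd : 2 ∣ (Finset.univ.filter (fun k => C.sign k = false)).card :=
    (ZMod.natCast_eq_zero_iff _ 2).mp hcast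
  obtain ⟨r, hr⟩ := hdvd
  exact ⟨r, by omega⟩
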